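/- Let P, Q ∈ [0,1] be real numbers and t ≥ 0. If Q ≤ (1 − P)·exp(t) and P ≤ (1 − Q)·exp(t), then P·Q ≤ σ(t)², where σ(t) = 1/(1 + exp(−t)) is the sigmoid function. Equivalently, in logarithmic form: if 0 < P < 1, 0 < Q < 1, log(1 − P) ≥ log Q − t, and log(1 − Q) ≥ log P − t, then log P + log Q ≤ 2·log σ(t). -/

import Mathlib

open Real

/-- The sigmoid function. -/
noncomputable def sigmoid (t : ℝ) : ℝ := 1 / (1 + Real.exp (-t))

/-- If `P, Q ∈ [0,1]`, `t ≥ 0`, `Q ≤ (1 − P)·exp t` and `P ≤ (1 − Q)·exp t`,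
then `P·Q ≤ σ(t)²`. -/
theorem stmt5 (P Q t : ℝ) (hP : P ∈ Set.Icc (0 : ℝ) 1) (hQ : Q ∈ Set.Icc (0 : ℝ) 1)
    (ht : 0 ≤ t) (h1 : Q ≤ (1 - P) * Real.exp t) (h2 : P ≤ (1 - Q) * Real.exp t) :
    P * Q ≤ _root_.sigmoid t ^ 2 := by
  obtain ⟨hP0, hP1⟩ := hP
  obtain ⟨hQ0, hQ1⟩ := hQ
  have hs : (0 : ℝ) < Real.exp t := Real.exp_pos t
  have hσ : _root_.sigmoid t = Real.exp t / (1 + Real.exp t) := by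
    unfold _root_.sigmoid
    rw [Real.exp_neg]
    field_simp
    ring
  rw [hσ, div_pow, le_div_iff₀ (by positivity)]
  have h3 : (P + Q) * (1 + Real.exp t) ≤ 2 * Real.exp t := by nlinarith
  have h4 : ((P + Q) * (1 + Real.exp t)) ^ 2 ≤ (2 * Real.exp t) ^ 2 := by
    have : 0 ≤ (P + Q) * (1 + Real.exp t) := by positivity
    nlinarith
  nlinarith [mul_nonneg (sq_nonneg (P - Q)) (sq_nonneg (1 + Real.exp t))]
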